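/- Let η ∈ [0, π) and let R be a real 2×2 matrix with det(R) = 1. Let J be the complex 2×2 diagonal matrix diag(1, −1). Then the matrix equation e^{iη}·R = J · (e^{−iη}·R⁻¹) · J (with R and R⁻¹ regarded as complex matrices) holds if and only if η = 0 and R₁₁ = R₂₂. (This is the coupled-boundary-condition part of Proposition 4.2: the coupled self-adjoint extensions invariant under reflection about the midpoint are exactly those with η = 0 and equal diagonal entries of R.) -/
import Mathlib

private lemma aux_inv (a b c d : ℂ) (h : a*d - b*c = 1) :
    (!![a,b;c,d])⁻¹ = !![d,-b;-c,a] := by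
  apply Matrix.inv_eq_right_inv
  ext i j; fin_cases i <;> fin_cases j <;>
    simp [Matrix.mul_apply, Fin.sum_univ_two] <;>
    (first | linear_combination h | linear_combination -h | ring)

private lemma aux_entries (e f a b c d : ℂ) :
    (e • !![a,b;c,d] = (Matrix.diagonal ![1,-1]) * (f • !![d,-b;-c,a]) * Matrix.diagonal ![1,-1]) ↔
    (e*a = f*d ∧ (e = f ∨ b = 0) ∧ (e = f ∨ c = 0) ∧ e*d = f*a) := by
  rw [← Matrix.ext_iff]
  simp [Fin.forall_fin_two, Matrix.mul_apply, Fin.sum_univ_two, Matrix.smul_apply]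
  constructor
  · rintro ⟨⟨h1,h2⟩,h3,h4⟩
    exact ⟨by linear_combination h1, h2, h3, by linear_combination h4⟩
  · rintro ⟨h1,h2,h3,h4⟩
    exact ⟨⟨by linear_combination h1, h2⟩, h3, by linear_combination h4⟩

/-- Proposition 4.2 (coupled boundary conditions): for `η ∈ [0, π)` and `R ∈ SL(2,ℝ)`,
the matrix equation `e^{iη} R = J (e^{-iη} R⁻¹) J` with `J = diag(1,-1)` holds
(over the complex numbers) if and only if `η = 0` and `R₁₁ = R₂₂`. -/
theorem stmt_1 (η : ℝ) (hη : η ∈ Set.Ico 0 Real.pi)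
    (R : Matrix (Fin 2) (Fin 2) ℝ) (hR : R.det = 1) :
    (Complex.exp (η * Complex.I) • R.map Complex.ofReal =
        (Matrix.diagonal ![1, -1] : Matrix (Fin 2) (Fin 2) ℂ) *
          (Complex.exp (-(η : ℂ) * Complex.I) • (R.map Complex.ofReal)⁻¹) *
          (Matrix.diagonal ![1, -1] : Matrix (Fin 2) (Fin 2) ℂ)) ↔
      (η = 0 ∧ R 0 0 = R 1 1) := by
  set a : ℂ := (R 0 0 : ℂ) with ha
  set b : ℂ := (R 0 1 : ℂ) with hb0
  set c : ℂ := (R 1 0 : ℂ) with hc0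
  set d : ℂ := (R 1 1 : ℂ) with hd
  set e : ℂ := Complex.exp (η * Complex.I) with he
  set f : ℂ := Complex.exp (-(η : ℂ) * Complex.I) with hf
  have hdetR : R 0 0 * R 1 1 - R 0 1 * R 1 0 = 1 := by
    rw [← Matrix.det_fin_two]; exact hR
  have hdetC : a * d - b * c = 1 := by
    rw [ha, hb0, hc0, hd]
    exact_mod_cast congrArg (Complex.ofReal) hdetR
  have hA : R.map Complex.ofReal = !![a,b;c,d] := by
    ext i j; fin_cases i <;> fin_cases j <;>
      simp [Matrix.map_apply, ha, hb0, hc0, hd]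
  have hinv : (R.map Complex.ofReal)⁻¹ = !![d,-b;-c,a] := by
    rw [hA]; exact aux_inv a b c d hdetC
  rw [hinv, hA, aux_entries]
  constructor
  · rintro ⟨h1, h2, h3, h4⟩
    by_cases hη0 : η = 0
    · refine ⟨hη0, ?_⟩
      have he1 : e = 1 := by rw [he, hη0]; simp
      have hf1 : f = 1 := by rw [hf, hη0]; simp
      rw [he1, hf1, one_mul, one_mul, ha, hd] at h1
      exact_mod_cast h1
    · exfalso
      have hsin : Real.sin η > 0 :=
        Real.sin_pos_of_pos_of_lt_pi (lt_of_le_of_ne hη.1 (Ne.symm hη0)) hη.2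
      have hefne : e ≠ f := by
        intro hcon
        have h1' : e.im = Real.sin η := by
          rw [he]; exact Complex.exp_ofReal_mul_I_im η
        have h2' : f.im = Real.sin (-η) := by
          rw [hf, show -(η:ℂ) * Complex.I = ((-η : ℝ):ℂ) * Complex.I by push_cast; ring]
          exact Complex.exp_ofReal_mul_I_im (-η)
        rw [hcon, h2', Real.sin_neg] at h1'
        nlinarith
      have hb : b = 0 := h2.resolve_left hefne
      have hc : c = 0 := h3.resolve_left hefne
      have had : a * d = 1 := by linear_combination hdetC + c * hb
      have hsq : e * e = f * f := by
        have h5 : (e * a) * (e * d) = (f * d) * (f * a) := by rw [h1, h4]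
        have h6 : e * e * (a * d) = f * f * (a * d) := by linear_combination h5
        rw [had, mul_one, mul_one] at h6
        exact h6
      have hene : e - f ≠ 0 := sub_ne_zero.mpr hefne
      have hepf : e + f = 0 := by
        have h7 : (e - f) * (e + f) = 0 := by linear_combination hsq
        exact (mul_eq_zero.mp h7).resolve_left hene
      have hfe : f = -e := by linear_combination hepf
      have hene' : e ≠ 0 := Complex.exp_ne_zero _
      have had' : a = -d := by
        rw [hfe] at h1
        have h8 : e * (a + d) = 0 := by linear_combination h1
        have h9 := (mul_eq_zero.mp h8).resolve_left hene'
        linear_combination h9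
      rw [had'] at had
      have h10 : ((R 1 1 : ℝ) ^ 2 : ℂ) = -1 := by
        rw [← hd]; linear_combination -had
      have h11 : (R 1 1 : ℝ) ^ 2 = -1 := by exact_mod_cast h10
      nlinarith [sq_nonneg (R 1 1)]
  · rintro ⟨hη0, hdd⟩
    have he1 : e = 1 := by rw [he, hη0]; simp
    have hf1 : f = 1 := by rw [hf, hη0]; simp
    have had : a = d := by rw [ha, hd, hdd]
    exact ⟨by rw [he1, hf1, had], Or.inl (by rw [he1, hf1]), Or.inl (by rw [he1, hf1]),
      by rw [he1, hf1, had]⟩
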